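/- Let μ be a probability measure and λ₁, λ₂ bounded measurable intensities with λᵢ ≥ κ > 0. Then ∫ λ₁(x)(log(λ₁(x)/λ₂(x)))² dμ(x) ≤ (1/κ)‖λ₁−λ₂‖_∞² + (1/κ²)‖λ₁−λ₂‖_∞³. -/

import Mathlib

open MeasureTheory Real

lemma pointwise_log_bound (κ a b : ℝ) (hκ : 0 < κ) (ha : κ ≤ a) (hb : κ ≤ b) :
    a * (Real.log (a / b)) ^ 2 ≤ (a - b) ^ 2 / κ + |a - b| ^ 3 / κ ^ 2 := by
  have ha0 : 0 < a := lt_of_lt_of_le hκ ha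
  have hb0 : 0 < b := lt_of_lt_of_le hκ hb
  rcases le_total a b with h | h
  · -- a ≤ b : |log(a/b)| = log(b/a) ≤ (b-a)/a
    have hlog : Real.log (b / a) ≤ b / a - 1 := Real.log_le_sub_one_of_pos (by positivity)
    have hlog0 : 0 ≤ Real.log (b / a) := Real.log_nonneg (by
      rw [le_div_iff₀ ha0]; linarith)
    have heq : Real.log (a / b) = - Real.log (b / a) := by
      rw [Real.log_div (ne_of_gt ha0) (ne_of_gt hb0), Real.log_div (ne_of_gt hb0) (ne_of_gt ha0)]
      ring
    have hsq : (Real.log (a / b)) ^ 2 ≤ (b / a - 1) ^ 2 := by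
      rw [heq, neg_pow]
      simpa using pow_le_pow_left₀ hlog0 hlog 2
    have h1 : a * (Real.log (a / b)) ^ 2 ≤ a * (b / a - 1) ^ 2 :=
      mul_le_mul_of_nonneg_left hsq (le_of_lt ha0)
    have h2 : a * (b / a - 1) ^ 2 = (b - a) ^ 2 / a := by
      field_simp
    have h3 : (b - a) ^ 2 / a ≤ (b - a) ^ 2 / κ :=
      div_le_div_of_nonneg_left (by positivity) hκ ha
    have h4 : 0 ≤ |a - b| ^ 3 / κ ^ 2 := by positivity
    have h6 : (b - a) ^ 2 / κ = (a - b) ^ 2 / κ := by ring_nf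
    have h1' : a * (Real.log (a / b)) ^ 2 ≤ (b - a) ^ 2 / a := by rw [← h2]; exact h1
    linarith
  · -- b ≤ a : log(a/b) ≤ (a-b)/b
    have hlog : Real.log (a / b) ≤ a / b - 1 := Real.log_le_sub_one_of_pos (by positivity)
    have hlog0 : 0 ≤ Real.log (a / b) := Real.log_nonneg (by
      rw [le_div_iff₀ hb0]; linarith)
    have hsq : (Real.log (a / b)) ^ 2 ≤ (a / b - 1) ^ 2 :=
      pow_le_pow_left₀ hlog0 hlog 2
    have h1 : a * (Real.log (a / b)) ^ 2 ≤ a * (a / b - 1) ^ 2 :=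
      mul_le_mul_of_nonneg_left hsq (le_of_lt ha0)
    have h2 : a * (a / b - 1) ^ 2 = a * (a - b) ^ 2 / b ^ 2 := by
      field_simp
    have habs : |a - b| = a - b := abs_of_nonneg (by linarith)
    have h3 : a * (a - b) ^ 2 / b ^ 2 ≤ (a - b) ^ 2 / κ + (a - b) ^ 3 / κ ^ 2 := by
      have hsplit : a * (a - b) ^ 2 / b ^ 2 = (a - b) ^ 2 / b + (a - b) ^ 3 / b ^ 2 := by
        field_simp; ring
      have t1 : (a - b) ^ 2 / b ≤ (a - b) ^ 2 / κ :=
        div_le_div_of_nonneg_left (by positivity) hκ hb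
      have t2 : (a - b) ^ 3 / b ^ 2 ≤ (a - b) ^ 3 / κ ^ 2 := by
        apply div_le_div_of_nonneg_left (pow_nonneg (by linarith) 3) (by positivity)
        exact pow_le_pow_left₀ (le_of_lt hκ) hb 2
      linarith
    rw [habs]
    linarith [h2 ▸ h1]

theorem second_log_moment_bound {X : Type*} [MeasurableSpace X] (μ : Measure X)
    [IsProbabilityMeasure μ] (κ : ℝ) (hκ : 0 < κ) (l1 l2 : X → ℝ)
    (hm1 : Measurable l1) (hm2 : Measurable l2)
    (hl1 : ∀ x, κ ≤ l1 x) (hl2 : ∀ x, κ ≤ l2 x)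
    (C : ℝ) (hC1 : ∀ x, |l1 x| ≤ C) (hC2 : ∀ x, |l2 x| ≤ C)
    (hint : Integrable (fun x => l1 x * (Real.log (l1 x / l2 x)) ^ 2) μ) :
    ∫ x, l1 x * (Real.log (l1 x / l2 x)) ^ 2 ∂μ ≤
      (1 / κ) * (⨆ x, |l1 x - l2 x|) ^ 2 +
      (1 / κ ^ 2) * (⨆ x, |l1 x - l2 x|) ^ 3 := by
  set M := ⨆ x, |l1 x - l2 x| with hM
  have hbdd : BddAbove (Set.range fun x => |l1 x - l2 x|) := by
    refine ⟨2 * C, ?_⟩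
    rintro _ ⟨x, rfl⟩
    calc |l1 x - l2 x| ≤ |l1 x| + |l2 x| := abs_sub _ _
      _ ≤ 2 * C := by linarith [hC1 x, hC2 x]
  have hMle : ∀ x, |l1 x - l2 x| ≤ M := fun x => le_ciSup hbdd x
  have hpt : ∀ x, l1 x * (Real.log (l1 x / l2 x)) ^ 2 ≤ (1 / κ) * M ^ 2 + (1 / κ ^ 2) * M ^ 3 := by
    intro x
    have hM0 : 0 ≤ M := le_trans (abs_nonneg _) (hMle x)
    have h := pointwise_log_bound κ (l1 x) (l2 x) hκ (hl1 x) (hl2 x)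
    have h2 : (l1 x - l2 x) ^ 2 ≤ M ^ 2 := by
      rw [← sq_abs]
      exact pow_le_pow_left₀ (abs_nonneg _) (hMle x) 2
    have h3 : |l1 x - l2 x| ^ 3 ≤ M ^ 3 :=
      pow_le_pow_left₀ (abs_nonneg _) (hMle x) 3
    have e1 : (l1 x - l2 x) ^ 2 / κ ≤ M ^ 2 / κ := by gcongr
    have e2 : |l1 x - l2 x| ^ 3 / κ ^ 2 ≤ M ^ 3 / κ ^ 2 := by
      gcongr
    calc l1 x * (Real.log (l1 x / l2 x)) ^ 2
        ≤ (l1 x - l2 x) ^ 2 / κ + |l1 x - l2 x| ^ 3 / κ ^ 2 := h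
      _ ≤ M ^ 2 / κ + M ^ 3 / κ ^ 2 := by linarith
      _ = (1 / κ) * M ^ 2 + (1 / κ ^ 2) * M ^ 3 := by ring
  calc ∫ x, l1 x * (Real.log (l1 x / l2 x)) ^ 2 ∂μ
      ≤ ∫ _x, (1 / κ) * M ^ 2 + (1 / κ ^ 2) * M ^ 3 ∂μ :=
        integral_mono hint (integrable_const _) hpt
    _ = (1 / κ) * M ^ 2 + (1 / κ ^ 2) * M ^ 3 := by
        rw [integral_const]; simp
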